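/- arXiv:1910.06093 — 7 statements merged into one kernel-verified Lean document; each statement's English description precedes it below -/
import Mathlib

section
/- Let f and g be probability density functions on ℝ that are each unimodal and symmetric about 0. Then the convolution f * g is also unimodal and symmetric about 0. -/
open MeasureTheory

/-- A function on ℝ is symmetric about 0 and unimodal (with mode 0):
even, nondecreasing on `(-∞,0]` and nonincreasing on `[0,∞)`. -/
def SymmetricUnimodal (f : ℝ → ℝ) : Prop :=
  (∀ x, f (-x) = f x) ∧ MonotoneOn f (Set.Iic 0) ∧ AntitoneOn f (Set.Ici 0)

/-- A symmetric unimodal function decreases with the absolute value of the argument. -/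
lemma SymmetricUnimodal.abs_le (f : ℝ → ℝ) (hf : SymmetricUnimodal f) {a b : ℝ}
    (h : |a| ≤ |b|) : f b ≤ f a := by
  obtain ⟨he, _, ha⟩ := hf
  have hfa : f |a| = f a := by
    rcases abs_choice a with h' | h'
    · rw [h']
    · rw [h', he]
  have hfb : f |b| = f b := by
    rcases abs_choice b with h' | h'
    · rw [h']
    · rw [h', he]
  rw [← hfa, ← hfb]
  exact ha (abs_nonneg a) ((abs_nonneg a).trans h) h

/-- Boundedness by the value at 0. -/
lemma SymmetricUnimodal.le_zero (f : ℝ → ℝ) (hf : SymmetricUnimodal f) (t : ℝ) :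
    f t ≤ f 0 :=
  hf.abs_le f (by simp)

/-- The convolution of two unimodal probability densities that are symmetric about 0
is again unimodal and symmetric about 0. -/
theorem convolution_symmetricUnimodal (f g : ℝ → ℝ)
    (hf0 : ∀ x, 0 ≤ f x) (hg0 : ∀ x, 0 ≤ g x)
    (hfi : Integrable f) (hgi : Integrable g)
    (hf1 : ∫ x, f x = 1) (hg1 : ∫ x, g x = 1)
    (hf : SymmetricUnimodal f) (hg : SymmetricUnimodal g) :
    SymmetricUnimodal (fun x => ∫ t, f t * g (x - t)) := by
  set h : ℝ → ℝ := fun x => ∫ t, f t * g (x - t) with hh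
  -- integrability of the basic integrands
  have key_int : ∀ c x : ℝ, Integrable (fun t => f (c - t) * g (x - t)) := by
    intro c x
    have hgc : Integrable (fun t => g (x - t)) := hgi.comp_sub_left x
    have hfm : AEStronglyMeasurable (fun t => f (c - t)) volume :=
      (hfi.comp_sub_left c).aestronglyMeasurable
    exact hgc.bdd_mul hfm
      (Filter.Eventually.of_forall fun t => by
        rw [Real.norm_eq_abs, abs_of_nonneg (hf0 _)]
        exact hf.le_zero f (c - t))
  have base_int : ∀ x : ℝ, Integrable (fun t => f t * g (x - t)) := by
    intro x
    have hgc : Integrable (fun t => g (x - t)) := hgi.comp_sub_left x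
    exact hgc.bdd_mul hfi.aestronglyMeasurable
      (Filter.Eventually.of_forall fun t => by
        rw [Real.norm_eq_abs, abs_of_nonneg (hf0 _)]
        exact hf.le_zero f t)
  -- symmetry of h
  have hsymm : ∀ x, h (-x) = h x := by
    intro x
    have := integral_neg_eq_self (fun t => f t * g (-x - t)) volume
    calc h (-x) = ∫ t, f t * g (-x - t) := rfl
      _ = ∫ t, f (-t) * g (-x - -t) := this.symm
      _ = ∫ t, f t * g (x - t) := by
          congr 1; funext t
          rw [hf.1 t]
          congr 1
          have : -x - -t = -(x - t) := by ring
          rw [this, hg.1]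
  -- the key rewriting identities
  have rw1 : ∀ x y : ℝ, h x = ∫ t, f (x + y - t) * g (y - t) := by
    intro x y
    have := integral_sub_left_eq_self (fun t => f t * g (x - t)) volume (x + y)
    calc h x = ∫ t, f t * g (x - t) := rfl
      _ = ∫ t, f (x + y - t) * g (x - (x + y - t)) := this.symm
      _ = ∫ t, f (x + y - t) * g (y - t) := by
          congr 1; funext t
          congr 1
          have : x - (x + y - t) = -(y - t) := by ring
          rw [this, hg.1]
  -- antitone on [0, ∞)
  have hanti : AntitoneOn h (Set.Ici 0) := by
    intro x hx y hy hxy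
    simp only [Set.mem_Ici] at hx hy
    -- h x - h y = ∫ (f t - f (x+y-t)) * g (x - t)
    have e1 : h x - h y = ∫ t, (f t - f (x + y - t)) * g (x - t) := by
      have hy' : h y = ∫ t, f (x + y - t) * g (x - t) := by
        rw [rw1 y x]; congr 1; funext t; rw [show y + x - t = x + y - t by ring]
      rw [hy']
      simp only [hh]
      rw [← integral_sub (base_int x) (key_int (x + y) x)]
      congr 1; funext t; ring
    have e2 : h x - h y = ∫ t, (f (x + y - t) - f t) * g (y - t) := by
      rw [rw1 x y]
      simp only [hh]
      rw [← integral_sub (key_int (x + y) y) (base_int y)]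
      congr 1; funext t; ring
    have e3 : 2 * (h x - h y) = ∫ t, (f t - f (x + y - t)) * (g (x - t) - g (y - t)) := by
      have hi1 : Integrable (fun t => (f t - f (x + y - t)) * g (x - t)) := by
        refine ((base_int x).sub (key_int (x + y) x)).congr
          (Filter.Eventually.of_forall fun t => ?_)
        simp only [Pi.sub_apply]
        ring
      have hi2 : Integrable (fun t => (f (x + y - t) - f t) * g (y - t)) := by
        refine ((key_int (x + y) y).sub (base_int y)).congr
          (Filter.Eventually.of_forall fun t => ?_)
        simp only [Pi.sub_apply]
        ring
      calc 2 * (h x - h y) = (h x - h y) + (h x - h y) := by ring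
        _ = (∫ t, (f t - f (x + y - t)) * g (x - t))
              + ∫ t, (f (x + y - t) - f t) * g (y - t) := by rw [← e1, ← e2]
        _ = ∫ t, ((f t - f (x + y - t)) * g (x - t)
              + (f (x + y - t) - f t) * g (y - t)) := (integral_add hi1 hi2).symm
        _ = ∫ t, (f t - f (x + y - t)) * (g (x - t) - g (y - t)) := by
            congr 1; funext t; ring
    have pos : 0 ≤ ∫ t, (f t - f (x + y - t)) * (g (x - t) - g (y - t)) := by
      apply integral_nonneg
      intro t
      simp only [Pi.zero_apply]
      rcases le_or_gt t ((x + y) / 2) with ht | ht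
      · -- f t ≥ f (x+y-t), g(x-t) ≥ g(y-t)
        have h1 : f (x + y - t) ≤ f t := by
          apply hf.abs_le f
          rw [← Real.sqrt_sq_eq_abs, ← Real.sqrt_sq_eq_abs]
          exact Real.sqrt_le_sqrt (by nlinarith)
        have h2 : g (y - t) ≤ g (x - t) := by
          apply hg.abs_le g
          rw [← Real.sqrt_sq_eq_abs, ← Real.sqrt_sq_eq_abs]
          exact Real.sqrt_le_sqrt (by nlinarith)
        exact mul_nonneg (by linarith) (by linarith)
      · have h1 : f t ≤ f (x + y - t) := by
          apply hf.abs_le f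
          rw [← Real.sqrt_sq_eq_abs, ← Real.sqrt_sq_eq_abs]
          exact Real.sqrt_le_sqrt (by nlinarith)
        have h2 : g (x - t) ≤ g (y - t) := by
          apply hg.abs_le g
          rw [← Real.sqrt_sq_eq_abs, ← Real.sqrt_sq_eq_abs]
          exact Real.sqrt_le_sqrt (by nlinarith)
        nlinarith [h1, h2]
    rw [← e3] at pos
    linarith
  refine ⟨hsymm, ?_, hanti⟩
  intro x hx y hy hxy
  simp only [Set.mem_Iic] at hx hy
  have := hanti (Set.mem_Ici.mpr (by linarith : (0:ℝ) ≤ -y))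
    (Set.mem_Ici.mpr (by linarith : (0:ℝ) ≤ -x)) (by linarith)
  rw [hsymm y, hsymm x] at this
  exact this
end

section
/- Suppose a node computes the majority of n_i independent sign estimates, each correct with probability p_idv = 1 - q_idv where q_idv ≤ max(2/(9S²), 1/2 - S/(2√3)) for some S > 0 (so p_idv > 1/2). Then the probability that the majority is wrong is at most exp(-n_i · S²/(2(S² + 4))). -/
open MeasureTheory ProbabilityTheory

/-- Hoeffding-type pointwise bound. -/
lemma hoeff_aux (x : ℝ) (hx : 0 ≤ x) :
    (1 - x) * Real.exp x + (1 + x) * Real.exp (-x) ≤ 2 * Real.exp (-(x ^ 2 / 2)) := by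
  set f : ℝ → ℝ := fun y => 2 * Real.exp (-(y ^ 2 / 2)) -
    ((1 - y) * Real.exp y + (1 + y) * Real.exp (-y)) with hf
  have hder : ∀ y : ℝ, HasDerivAt f
      (y * (Real.exp y + Real.exp (-y) - 2 * Real.exp (-(y ^ 2 / 2)))) y := by
    intro y
    have h0 : HasDerivAt (fun x : ℝ => -(x ^ 2 / 2)) (-y) y := by
      have := ((hasDerivAt_pow 2 y).div_const 2).neg
      exact this.congr_deriv (by norm_num)
    have h1 : HasDerivAt (fun x : ℝ => 2 * Real.exp (-(x ^ 2 / 2)))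
        (2 * (Real.exp (-(y ^ 2 / 2)) * (-y))) y := (h0.exp).const_mul 2
    have h2 : HasDerivAt (fun x : ℝ => (1 - x) * Real.exp x)
        ((-1) * Real.exp y + (1 - y) * Real.exp y) y :=
      ((hasDerivAt_id y).const_sub 1).mul (Real.hasDerivAt_exp y)
    have h3n : HasDerivAt (fun x : ℝ => Real.exp (-x)) (Real.exp (-y) * (-1)) y :=
      ((hasDerivAt_id y).neg).exp
    have h3 : HasDerivAt (fun x : ℝ => (1 + x) * Real.exp (-x))
        (1 * Real.exp (-y) + (1 + y) * (Real.exp (-y) * (-1))) y :=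
      (((hasDerivAt_id y).const_add 1)).mul h3n
    have := h1.sub (h2.add h3)
    exact this.congr_deriv (by ring)
  have hmono : MonotoneOn f (Set.Ici (0 : ℝ)) := by
    refine monotoneOn_of_deriv_nonneg (convex_Ici 0)
      (fun y _ => ((hder y).continuousAt).continuousWithinAt)
      (fun y _ => ((hder y).differentiableAt).differentiableWithinAt) ?_
    intro y hy
    rw [(hder y).deriv]
    have hy0 : 0 < y := by simpa using hy
    have h1 : Real.exp (-(y ^ 2 / 2)) ≤ 1 := by
      rw [Real.exp_le_one_iff]; nlinarith [sq_nonneg y]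
    have h2 : (2 : ℝ) ≤ Real.exp y + Real.exp (-y) := by
      have hm : Real.exp y * Real.exp (-y) = 1 := by
        rw [← Real.exp_add]; simp
      nlinarith [sq_nonneg (Real.exp y - Real.exp (-y)), Real.exp_pos y, Real.exp_pos (-y)]
    nlinarith
  have h0 : f 0 ≤ f x := hmono Set.self_mem_Ici hx hx
  have hf0 : f 0 = 0 := by norm_num [hf]
  rw [hf0] at h0
  simp only [hf] at h0
  linarith

lemma snr_alg (S q : ℝ) (hS : 0 < S)
    (hq1 : 2 / Real.sqrt 3 < S → q ≤ 2 / (9 * S ^ 2))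
    (hq2 : S ≤ 2 / Real.sqrt 3 → q ≤ 1 / 2 - S / (2 * Real.sqrt 3))
    (hq0 : 0 ≤ q) :
    0 ≤ 1 / 2 - q ∧ S ^ 2 / (2 * (S ^ 2 + 4)) ≤ 2 * (1 / 2 - q) ^ 2 := by
  have h3 : Real.sqrt 3 * Real.sqrt 3 = 3 := Real.mul_self_sqrt (by norm_num)
  have h3p : 0 < Real.sqrt 3 := Real.sqrt_pos.mpr (by norm_num)
  have hSp : 0 < S ^ 2 := by positivity
  rcases le_or_gt S (2 / Real.sqrt 3) with hc | hc
  · have hq := hq2 hc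
    have hb : S / (2 * Real.sqrt 3) ≤ 1 / 2 - q := by linarith
    have hbp : 0 < S / (2 * Real.sqrt 3) := by positivity
    constructor
    · linarith
    · rw [div_le_iff₀ (by positivity)]
      have hsq : S ^ 2 / 12 ≤ (1 / 2 - q) ^ 2 := by
        have := mul_le_mul hb hb hbp.le (by linarith)
        calc S ^ 2 / 12 = S / (2 * Real.sqrt 3) * (S / (2 * Real.sqrt 3)) := by
              field_simp; ring_nf; nlinarith [h3]
          _ ≤ (1 / 2 - q) * (1 / 2 - q) := this
          _ = (1 / 2 - q) ^ 2 := (sq _).symm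
      nlinarith
  · have hq := hq1 hc
    have hS2 : 4 / 3 < S ^ 2 := by
      have h2 : 2 / Real.sqrt 3 > 0 := by positivity
      have hm : 2 / Real.sqrt 3 * (2 / Real.sqrt 3) < S * S := by
        nlinarith [hc, h2, hS]
      have he : 2 / Real.sqrt 3 * (2 / Real.sqrt 3) = 4 / 3 := by
        field_simp; nlinarith [h3]
      nlinarith [hm, he]
    have hqb : q ≤ 2 / (9 * S ^ 2) := hq
    have hq16 : q ≤ 1 / 6 := by
      calc q ≤ 2 / (9 * S ^ 2) := hqb
        _ ≤ 1 / 6 := by rw [div_le_iff₀ (by positivity)]; nlinarith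
    constructor
    · linarith
    · rw [div_le_iff₀ (by positivity)]
      have hqS : q * (9 * S ^ 2) ≤ 2 := by
        have h := hqb
        rw [le_div_iff₀ (show (0:ℝ) < 9 * S ^ 2 by positivity)] at h
        exact h
      nlinarith [sq_nonneg (S ^ 2 - 4 / 3), sq_nonneg (1 / 2 - q), hSp, hq0, hq16,
        sq_nonneg (S ^ 2 * (1/2 - q)), mul_nonneg hq0 hSp.le]

/-- Local majority-vote error bound: a node computing the majority of `ni` independent
sign estimates, each correct with probability `p = 1 - q` where `q` satisfies the
SNR-dependent bound (`q ≤ 2/(9S²)` if `S > 2/√3`, else `q ≤ 1/2 - S/(2√3)`), errs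
with probability at most `exp(- ni · S²/(2(S²+4)))`. -/
theorem local_majority_error
    {Ω : Type*} [MeasurableSpace Ω] (μ : Measure Ω) [IsProbabilityMeasure μ]
    (ni : ℕ) (S q p : ℝ) (hS : 0 < S)
    (hq1 : 2 / Real.sqrt 3 < S → q ≤ 2 / (9 * S ^ 2))
    (hq2 : S ≤ 2 / Real.sqrt 3 → q ≤ 1 / 2 - S / (2 * Real.sqrt 3))
    (hq0 : 0 ≤ q)
    (hp : p = 1 - q)
    (X : Fin ni → Ω → ℝ)
    (hmeas : ∀ i, Measurable (X i))
    (hindep : iIndepFun X μ)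
    (hval : ∀ i ω, X i ω = 0 ∨ X i ω = 1)
    (hbern : ∀ i, μ {ω | X i ω = 1} = ENNReal.ofReal p) :
    (μ {ω | (∑ i, X i ω) ≤ (ni : ℝ) / 2}).toReal ≤
      Real.exp (-((ni : ℝ) * S ^ 2 / (2 * (S ^ 2 + 4)))) := by
  obtain ⟨ha0, hkey⟩ := snr_alg S q hS hq1 hq2 hq0
  set a : ℝ := 1 / 2 - q with ha_def
  clear_value a
  have hp_eq : p = 1 / 2 + a := by rw [hp, ha_def]; ring
  have hp0 : 0 ≤ p := by rw [hp_eq]; linarith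
  have hp1 : p ≤ 1 := by rw [hp]; linarith
  set t : ℝ := -(4 * a) with ht_def
  have ht0 : t ≤ 0 := by simp [ht_def]; linarith
  -- pointwise identity for exp (t * X i ω)
  have hpt : ∀ i, (fun ω => Real.exp (t * X i ω)) =
      fun ω => 1 + (Real.exp t - 1) * X i ω := by
    intro i; funext ω
    rcases hval i ω with h | h <;> simp [h]
  -- X i as indicator
  have hms : ∀ i, MeasurableSet {ω | X i ω = 1} := by
    intro i
    exact (hmeas i) (measurableSet_singleton 1)
  have hXind : ∀ i, X i = Set.indicator {ω | X i ω = 1} (fun _ => (1 : ℝ)) := by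
    intro i; funext ω
    rcases hval i ω with h | h
    · have : ω ∉ {ω | X i ω = 1} := by simp [h]
      simp [Set.indicator, this, h]
    · have : ω ∈ {ω | X i ω = 1} := by simp [h]
      simp [Set.indicator, this, h]
  have hXint : ∀ i, Integrable (X i) μ := by
    intro i; rw [hXind i]
    exact (integrable_const (1 : ℝ)).indicator (hms i)
  have hXmean : ∀ i, ∫ ω, X i ω ∂μ = p := by
    intro i
    have : ∫ ω, X i ω ∂μ = ∫ ω, Set.indicator {ω | X i ω = 1} (fun _ => (1 : ℝ)) ω ∂μ := by
      rw [← hXind i]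
    rw [this, MeasureTheory.integral_indicator_const _ (hms i), measureReal_def, hbern i, smul_eq_mul, mul_one,
      ENNReal.toReal_ofReal hp0]
  have hint : ∀ i, Integrable (fun ω => Real.exp (t * X i ω)) μ := by
    intro i
    rw [hpt i]
    exact (integrable_const (1 : ℝ)).add ((hXint i).const_mul _)
  have hmgf : ∀ i, mgf (X i) μ t = 1 + (Real.exp t - 1) * p := by
    intro i
    rw [mgf]
    calc ∫ ω, Real.exp (t * X i ω) ∂μ = ∫ ω, (1 + (Real.exp t - 1) * X i ω) ∂μ := by
          rw [← hpt i]
      _ = 1 + (Real.exp t - 1) * p := by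
          rw [integral_add (integrable_const _) ((hXint i).const_mul _),
            integral_const, integral_const_mul, hXmean i]
          simp
  -- Chernoff
  have hintsum : Integrable (fun ω => Real.exp (t * (∑ i, X i) ω)) μ :=
    hindep.integrable_exp_mul_sum hmeas (fun i _ => hint i)
  have hcher := measure_le_le_exp_mul_mgf (X := ∑ i, X i) (μ := μ) (t := t)
    ((ni : ℝ) / 2) ht0 hintsum
  have hset : {ω | (∑ i, X i ω) ≤ (ni : ℝ) / 2} = {ω | (∑ i, X i) ω ≤ (ni : ℝ) / 2} := by
    ext ω; simp [Finset.sum_apply]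
  rw [hset]
  refine hcher.trans ?_
  -- compute the mgf of the sum
  rw [hindep.mgf_sum hmeas Finset.univ]
  have hprod : ∏ i : Fin ni, mgf (X i) μ t = (1 + (Real.exp t - 1) * p) ^ ni := by
    simp [hmgf]
  rw [hprod]
  -- combine into a per-trial factor
  have hfac0 : 0 ≤ 1 + (Real.exp t - 1) * p := by
    have := Real.exp_pos t
    nlinarith
  have hcollapse : Real.exp (-t * ((ni : ℝ) / 2)) * (1 + (Real.exp t - 1) * p) ^ ni =
      (Real.exp (-t / 2) * (1 + (Real.exp t - 1) * p)) ^ ni := by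
    rw [mul_pow, ← Real.exp_nat_mul]
    congr 1
    ring_nf
  rw [hcollapse]
  -- per-factor Hoeffding bound
  have hper : Real.exp (-t / 2) * (1 + (Real.exp t - 1) * p) ≤ Real.exp (-(2 * a ^ 2)) := by
    have hx := hoeff_aux (2 * a) (by linarith)
    have e1 : Real.exp (-t / 2) = Real.exp (2 * a) := by congr 1; rw [ht_def]; ring
    have e2 : Real.exp t = Real.exp (-(2 * a)) * Real.exp (-(2 * a)) := by
      rw [← Real.exp_add]; congr 1; rw [ht_def]; ring
    have e3 : Real.exp (2 * a) * Real.exp (-(2 * a)) = 1 := by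
      rw [← Real.exp_add]; simp
    have e4 : Real.exp (-((2 * a) ^ 2 / 2)) = Real.exp (-(2 * a ^ 2)) := by
      congr 1; ring
    rw [e1, hp_eq]
    have expand : Real.exp (2 * a) * (1 + (Real.exp t - 1) * (1 / 2 + a)) =
        (1 / 2 - a) * Real.exp (2 * a) + (1 / 2 + a) * Real.exp (-(2 * a)) := by
      rw [e2]
      linear_combination (1 / 2 + a) * Real.exp (-(2 * a)) * e3
    rw [expand, ← e4]
    nlinarith [hx]
  calc (Real.exp (-t / 2) * (1 + (Real.exp t - 1) * p)) ^ ni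
      ≤ (Real.exp (-(2 * a ^ 2))) ^ ni := by
        exact pow_le_pow_left₀ (by positivity) hper ni
    _ = Real.exp ((ni : ℝ) * (-(2 * a ^ 2))) := by rw [← Real.exp_nat_mul]
    _ ≤ Real.exp (-((ni : ℝ) * S ^ 2 / (2 * (S ^ 2 + 4)))) := by
        rw [Real.exp_le_exp]
        have : (ni : ℝ) * (S ^ 2 / (2 * (S ^ 2 + 4))) ≤ (ni : ℝ) * (2 * a ^ 2) :=
          mul_le_mul_of_nonneg_left hkey (Nat.cast_nonneg ni)
        have heq : (ni : ℝ) * S ^ 2 / (2 * (S ^ 2 + 4)) = (ni : ℝ) * (S ^ 2 / (2 * (S ^ 2 + 4))) := by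
          ring
        rw [heq]
        linarith
end

section
/- Let m = n - b correct nodes each independently send the correct sign with probability u ≥ u* > 1/(2(1-α)) where b = nα, and let all b Byzantine nodes send the wrong sign. If u* - 1/(2(1-α)) ≥ √(log(Δ)/(2n(1-α))) for some Δ > 2, then the probability that at most n/2 nodes in total send the correct sign is less than 1/Δ. -/
open MeasureTheory ProbabilityTheory

/-- `2(e^r - 1) < r(e^r + 1)` for `r > 0`. -/
lemma aux_exp_ineq {r : ℝ} (hr : 0 < r) :
    2 * (Real.exp r - 1) < r * (Real.exp r + 1) := by
  have hmono : StrictMonoOn (fun x : ℝ => x * (Real.exp x + 1) - 2 * (Real.exp x - 1))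
      (Set.Ici (0:ℝ)) := by
    apply strictMonoOn_of_deriv_pos (convex_Ici 0)
    · exact Continuous.continuousOn (by fun_prop)
    · intro x hx
      rw [interior_Ici] at hx
      have hd : HasDerivAt (fun x : ℝ => x * (Real.exp x + 1) - 2 * (Real.exp x - 1))
          (1 * (Real.exp x + 1) + x * Real.exp x - 2 * Real.exp x) x := by
        exact ((hasDerivAt_id x).mul ((Real.hasDerivAt_exp x).add_const 1)).sub
          (((Real.hasDerivAt_exp x).sub_const 1).const_mul 2)
      rw [hd.deriv]
      have hx' : (0:ℝ) < x := hx
      have hxne : (-x : ℝ) ≠ 0 := neg_ne_zero.mpr hx'.ne'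
      have h := Real.add_one_lt_exp hxne
      rw [Real.exp_neg] at h
      have hpos := Real.exp_pos x
      have h2 : (-x + 1) * Real.exp x < 1 := by
        have := mul_lt_mul_of_pos_right h hpos
        rwa [inv_mul_cancel₀ hpos.ne'] at this
      nlinarith
  have h := hmono Set.self_mem_Ici (Set.mem_Ici.2 hr.le) hr
  simp only [Real.exp_zero] at h
  nlinarith [h]

/-- Strict Hoeffding-type bound for Bernoulli MGF, lower tail. -/
lemma aux_bernoulli_mgf {u s : ℝ} (hu0 : 0 ≤ u) (hu1 : u ≤ 1) (hs : 0 < s) :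
    (1 - u) + u * Real.exp (-s) < Real.exp (-(u * s) + s ^ 2 / 8) := by
  have hDpos : ∀ x : ℝ, 0 < 1 - u + u * Real.exp (-x) := by
    intro x
    rcases eq_or_lt_of_le hu0 with h | h
    · simp [← h]
    · have := Real.exp_pos (-x); nlinarith
  have hmono : StrictMonoOn
      (fun x : ℝ => x ^ 2 / 8 - u * x - Real.log (1 - u + u * Real.exp (-x)))
      (Set.Ici (0:ℝ)) := by
    apply strictMonoOn_of_deriv_pos (convex_Ici 0)
    · apply Continuous.continuousOn
      apply Continuous.sub (by fun_prop)
      exact Continuous.log (by fun_prop) (fun x => (hDpos x).ne')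
    · intro x hx
      rw [interior_Ici] at hx
      have hx' : (0:ℝ) < x := hx
      have hD := hDpos x
      have hd : HasDerivAt
          (fun x : ℝ => x ^ 2 / 8 - u * x - Real.log (1 - u + u * Real.exp (-x)))
          (x / 4 - u - (u * Real.exp (-x) * (-1)) / (1 - u + u * Real.exp (-x))) x := by
        have hDd : HasDerivAt (fun x : ℝ => 1 - u + u * Real.exp (-x))
            (u * Real.exp (-x) * (-1)) x := by
          have h1 : HasDerivAt (fun x : ℝ => Real.exp (-x)) (Real.exp (-x) * (-1)) x :=
            (Real.hasDerivAt_exp (-x)).comp x (hasDerivAt_neg x)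
          have := (h1.const_mul u).const_add (1 - u)
          simpa [mul_assoc] using this
        have hlog := hDd.log hD.ne'
        have h1 : HasDerivAt (fun x : ℝ => x ^ 2 / 8 - u * x) (x / 4 - u) x := by
          have h2 := ((hasDerivAt_pow 2 x).div_const 8).sub ((hasDerivAt_id x).const_mul u)
          have he : ((2:ℕ) : ℝ) * x ^ (2 - 1) / 8 - u * 1 = x / 4 - u := by
            push_cast; ring
          rw [he] at h2
          exact h2
        exact h1.sub hlog
      rw [hd.deriv]
      have hexpand : x / 4 - u - (u * Real.exp (-x) * (-1)) / (1 - u + u * Real.exp (-x))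
          = ((x / 4 - u) * (1 - u + u * Real.exp (-x)) + u * Real.exp (-x))
            / (1 - u + u * Real.exp (-x)) := by
        field_simp
        ring
      rw [hexpand]
      apply div_pos _ hD
      set y := Real.exp (-(x / 2)) with hy
      have hy_pos : 0 < y := Real.exp_pos _
      have hy_lt : y < 1 := by rw [hy, Real.exp_lt_one_iff]; linarith
      have hx2 : Real.exp (-x) = y ^ 2 := by
        rw [hy, sq, ← Real.exp_add]
        congr 1
        ring
      rw [hx2]
      -- key algebraic facts
      have hA : u * (1 - u) * (1 + y) ^ 2 ≤ 1 - u + u * y ^ 2 := by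
        nlinarith [sq_nonneg ((1 - u) - u * y)]
      have hy_mul : y * Real.exp (x / 2) = 1 := by
        rw [hy, ← Real.exp_add]; norm_num
      have haux := aux_exp_ineq (half_pos hx)
      have hB : 1 - y < x / 4 * (1 + y) := by
        nlinarith [mul_lt_mul_of_pos_right haux hy_pos, hy_mul]
      have hA1 : u * (1 - u) * (1 + y) ^ 2 * (1 - y) ≤ (1 - u + u * y ^ 2) * (1 - y) :=
        mul_le_mul_of_nonneg_right hA (by linarith)
      have hB1 : (1 - u + u * y ^ 2) * (1 - y) < (1 - u + u * y ^ 2) * (x / 4 * (1 + y)) :=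
        mul_lt_mul_of_pos_left hB (by nlinarith [hDpos x, hx2])
      have hT : 0 < ((x / 4 - u) * (1 - u + u * y ^ 2) + u * y ^ 2) * (1 + y) := by
        nlinarith [hA1, hB1]
      nlinarith [hT, hy_pos]
  have h0 := hmono Set.self_mem_Ici (Set.mem_Ici.2 hs.le) hs
  simp only [neg_zero, Real.exp_zero, mul_one, mul_zero] at h0
  have h0' : 0 < s ^ 2 / 8 - u * s - Real.log (1 - u + u * Real.exp (-s)) := by
    have : Real.log (1 - u + u) = 0 := by norm_num
    simp only [this] at h0
    linarith [h0]
  have hD := hDpos s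
  calc 1 - u + u * Real.exp (-s) = Real.exp (Real.log (1 - u + u * Real.exp (-s))) :=
        (Real.exp_log hD).symm
    _ < Real.exp (-(u * s) + s ^ 2 / 8) := by
        apply Real.exp_lt_exp.2
        linarith

/-- Global estimation error at the master: with `b = nα` Byzantine nodes sending the
wrong sign and `m = n - b` intact nodes each independently sending the correct sign
with probability `u ≥ u* > 1/(2(1-α))`, if `u* - 1/(2(1-α)) ≥ √(log Δ/(2n(1-α)))`
for some `Δ > 2`, then the probability that at most `n/2` nodes in total send the
correct sign is less than `1/Δ`. -/
theorem global_majority_error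
    {Ω : Type*} [MeasurableSpace Ω] (μ : Measure Ω) [IsProbabilityMeasure μ]
    (n b : ℕ) (α u ustar Δ : ℝ)
    (hn : 0 < n) (hb : b ≤ n) (hα0 : 0 ≤ α) (hα1 : α < 1)
    (hbα : (b : ℝ) = n * α)
    (hu1 : u ≤ 1) (huu : ustar ≤ u)
    (hustar : 1 / (2 * (1 - α)) < ustar)
    (hΔ : 2 < Δ)
    (hgap : Real.sqrt (Real.log Δ / (2 * n * (1 - α))) ≤ ustar - 1 / (2 * (1 - α)))
    (X : Fin (n - b) → Ω → ℝ)
    (hmeas : ∀ i, Measurable (X i))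
    (hindep : iIndepFun X μ)
    (hval : ∀ i ω, X i ω = 0 ∨ X i ω = 1)
    (hbern : ∀ i, μ {ω | X i ω = 1} = ENNReal.ofReal u) :
    (μ {ω | (∑ i, X i ω) ≤ (n : ℝ) / 2}).toReal < 1 / Δ := by
  have h1α : (0:ℝ) < 1 - α := by linarith
  set c : ℝ := 1 / (2 * (1 - α)) with hc
  have hc_pos : 0 < c := by positivity
  set ε : ℝ := ustar - c with hε_def
  have hε : 0 < ε := by simp only [hε_def]; linarith
  have hu0 : 0 < u := by linarith
  have hmR : ((n - b : ℕ) : ℝ) = n * (1 - α) := by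
    rw [Nat.cast_sub hb, hbα]; ring
  have hm_pos : 0 < ((n - b : ℕ) : ℝ) := by rw [hmR]; positivity
  have hm_ne : n - b ≠ 0 := by
    have : 0 < n - b := by exact_mod_cast hm_pos
    exact this.ne'
  have hlogΔ : 0 < Real.log Δ := Real.log_pos (by linarith)
  have hlog : Real.log Δ ≤ 2 * (n - b : ℕ) * ε ^ 2 := by
    have hq : (0:ℝ) ≤ Real.log Δ / (2 * n * (1 - α)) := by positivity
    have h2 := Real.sq_sqrt hq
    have h3 : Real.sqrt (Real.log Δ / (2 * n * (1 - α))) ≤ ε := hgap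
    have h4 : Real.log Δ / (2 * n * (1 - α)) ≤ ε ^ 2 := by
      nlinarith [Real.sqrt_nonneg (Real.log Δ / (2 * n * (1 - α)))]
    have h5 : (2:ℝ) * n * (1 - α) = 2 * ((n - b : ℕ) : ℝ) := by rw [hmR]; ring
    rw [h5] at h4
    have := (div_le_iff₀ (by positivity : (0:ℝ) < 2 * ((n - b : ℕ) : ℝ))).mp h4
    linarith
  set t : ℝ := -(4 * ε) with ht_def
  have ht_neg : t < 0 := by simp only [ht_def]; linarith
  clear_value c ε t
  -- each exp(t * X i ·) is affine in X i
  have keyfun : ∀ i, (fun ω => Real.exp (t * X i ω))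
      = fun ω => 1 + (Real.exp t - 1) * X i ω := by
    intro i
    funext ω
    rcases hval i ω with h | h <;> rw [h] <;> simp
  have hXint : ∀ i, Integrable (X i) μ := by
    intro i
    refine Integrable.mono' (integrable_const 1) (hmeas i).aestronglyMeasurable ?_
    filter_upwards with ω
    rcases hval i ω with h | h <;> simp [h]
  have hEX : ∀ i, ∫ ω, X i ω ∂μ = u := by
    intro i
    have hset : MeasurableSet {ω | X i ω = 1} := (hmeas i) (measurableSet_singleton 1)
    have hind : (fun ω => X i ω) = Set.indicator {ω | X i ω = 1} (fun _ => (1:ℝ)) := by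
      funext ω
      rcases hval i ω with h | h <;> simp [Set.indicator, h]
    rw [hind, integral_indicator_const _ hset, measureReal_def, hbern i, ENNReal.toReal_ofReal hu0.le]
    simp
  have hint_exp : ∀ i, Integrable (fun ω => Real.exp (t * X i ω)) μ := by
    intro i
    rw [keyfun i]
    exact (integrable_const 1).add ((hXint i).const_mul _)
  have hmgf : ∀ i, mgf (X i) μ t = (1 - u) + u * Real.exp t := by
    intro i
    rw [mgf]
    calc ∫ ω, Real.exp (t * X i ω) ∂μ = ∫ ω, (1 + (Real.exp t - 1) * X i ω) ∂μ := by
          rw [keyfun i]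
      _ = ∫ ω, (1:ℝ) ∂μ + ∫ ω, (Real.exp t - 1) * X i ω ∂μ :=
          integral_add (integrable_const 1) ((hXint i).const_mul _)
      _ = 1 + (Real.exp t - 1) * u := by
          rw [integral_const, integral_const_mul, hEX i]
          simp
      _ = (1 - u) + u * Real.exp t := by ring
  have hSint : Integrable (fun ω => Real.exp (t * (∑ i, X i) ω)) μ :=
    hindep.integrable_exp_mul_sum hmeas (fun i _ => hint_exp i)
  have hSmgf : mgf (∑ i, X i) μ t = ((1 - u) + u * Real.exp t) ^ (n - b) := by
    rw [hindep.mgf_sum hmeas]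
    simp [hmgf, Finset.prod_const, Finset.card_univ]
  have hchernoff := measure_le_le_exp_mul_mgf (X := ∑ i, X i) (μ := μ) ((n:ℝ)/2)
    ht_neg.le hSint
  have hsetEq : {ω | (∑ i, X i ω) ≤ (n : ℝ) / 2} = {ω | (∑ i, X i) ω ≤ (n : ℝ) / 2} := by
    ext ω; simp [Finset.sum_apply]
  rw [hsetEq]
  rw [hSmgf] at hchernoff
  -- strict bound on the base
  have hbase_lt : (1 - u) + u * Real.exp t < Real.exp (u * t + t ^ 2 / 8) := by
    have := aux_bernoulli_mgf hu0.le hu1 (show (0:ℝ) < 4 * ε by linarith)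
    have ht_eq : t = -(4 * ε) := ht_def
    rw [ht_eq]
    convert this using 2
    ring
  have hbase_nonneg : 0 ≤ (1 - u) + u * Real.exp t := by
    have := Real.exp_pos t
    nlinarith
  have hpow_lt : ((1 - u) + u * Real.exp t) ^ (n - b) < Real.exp (u * t + t ^ 2 / 8) ^ (n - b) :=
    pow_lt_pow_left₀ hbase_lt hbase_nonneg hm_ne
  have hfactor_pos : 0 < Real.exp (-t * ((n:ℝ)/2)) := Real.exp_pos _
  have hstep : (μ {ω | (∑ i, X i) ω ≤ (n : ℝ) / 2}).toReal
      < Real.exp (-t * ((n:ℝ)/2)) * Real.exp (u * t + t ^ 2 / 8) ^ (n - b) :=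
    lt_of_le_of_lt hchernoff (by
      exact mul_lt_mul_of_pos_left hpow_lt hfactor_pos)
  have hcollapse : Real.exp (-t * ((n:ℝ)/2)) * Real.exp (u * t + t ^ 2 / 8) ^ (n - b)
      = Real.exp (-t * ((n:ℝ)/2) + ((n - b : ℕ) : ℝ) * (u * t + t ^ 2 / 8)) := by
    rw [← Real.exp_nat_mul, ← Real.exp_add]
  rw [hcollapse] at hstep
  -- bound the exponent
  have hexp_le : -t * ((n:ℝ)/2) + ((n - b : ℕ) : ℝ) * (u * t + t ^ 2 / 8) ≤ -Real.log Δ := by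
    have hnc : (n:ℝ) / 2 = ((n - b : ℕ) : ℝ) * c := by
      rw [hmR, hc]
      field_simp
    rw [hnc, ht_def]
    have hgoal : 4 * ε * (((n - b : ℕ) : ℝ) * c) + ((n - b : ℕ) : ℝ) * (u * (-(4*ε)) + (4*ε)^2/8)
        = 4 * ε * ((n - b : ℕ) : ℝ) * (c - u) + 2 * ((n - b : ℕ) : ℝ) * ε ^ 2 := by ring
    have h6 : 4 * ε * ((n - b : ℕ) : ℝ) * (c - u) ≤ 4 * ε * ((n - b : ℕ) : ℝ) * (c - ustar) := by
      apply mul_le_mul_of_nonneg_left (by linarith) (by positivity)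
    have h7 : c - ustar = -ε := by rw [hε_def]; ring
    rw [h7] at h6
    linarith [hlog, hgoal, h6]
  have hfinal : Real.exp (-t * ((n:ℝ)/2) + ((n - b : ℕ) : ℝ) * (u * t + t ^ 2 / 8)) ≤ 1 / Δ := by
    calc Real.exp (-t * ((n:ℝ)/2) + ((n - b : ℕ) : ℝ) * (u * t + t ^ 2 / 8))
        ≤ Real.exp (-Real.log Δ) := Real.exp_le_exp.2 hexp_le
      _ = 1 / Δ := by rw [Real.exp_neg, Real.exp_log (by linarith : (0:ℝ) < Δ), one_div]
  exact lt_of_lt_of_le hstep hfinal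
end

section
/- Let f be L-coordinate-smooth with lower bound f*, and at step t let w_{t+1} = w_t - γ μ̂_t with μ̂_t ∈ {-1,+1}^d. Then E[f(w_{t+1}) - f(w_t)] ≤ -γ‖g(w_t)‖₁ + 2γ Σ_k |g_k(w_t)| · P[μ̂_{t,k} ≠ sign(g_k(w_t))] + (γ²/2)‖L‖₁. -/
open MeasureTheory

/-- Per-step descent inequality for SignSGD-type updates: if `f` is coordinate-wise
smooth with constants `L` and gradient `g`, and `w' = w - γ μ̂` with `μ̂ ∈ {±1}^d` a
random sign vector, then `E[f(w') - f(w)] ≤ -γ‖g(w)‖₁ +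
2γ Σ_k |g_k(w)| P[μ̂_k ≠ sign(g_k(w))] + (γ²/2)‖L‖₁`. -/
theorem signsgd_descent_step
    {Ω : Type*} [MeasurableSpace Ω] (μ : Measure Ω) [IsProbabilityMeasure μ]
    (d : ℕ) (f : (Fin d → ℝ) → ℝ) (g : (Fin d → ℝ) → (Fin d → ℝ)) (L : Fin d → ℝ)
    (hL : ∀ k, 0 ≤ L k)
    (hgrad : ∀ x, HasFDerivAt f (∑ k, g x k • (ContinuousLinearMap.proj k : (Fin d → ℝ) →L[ℝ] ℝ)) x)
    (hsmooth : ∀ x y : Fin d → ℝ,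
      |f y - (f x + ∑ k, g x k * (y k - x k))| ≤ (1 / 2) * ∑ k, L k * (y k - x k) ^ 2)
    (γ : ℝ) (w : Fin d → ℝ) (μhat : Ω → Fin d → ℝ)
    (hmeas : Measurable μhat)
    (hsign : ∀ ω k, μhat ω k = 1 ∨ μhat ω k = -1)
    (hint : Integrable (fun ω => f (w - γ • μhat ω)) μ) :
    ∫ ω, (f (w - γ • μhat ω) - f w) ∂μ ≤
      -γ * (∑ k, |g w k|) +
        2 * γ * (∑ k, |g w k| * (μ {ω | μhat ω k ≠ Real.sign (g w k)}).toReal) +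
        γ ^ 2 / 2 * (∑ k, L k) := by
  classical
  set S : Fin d → Set Ω := fun k => {ω | μhat ω k ≠ Real.sign (g w k)} with hS
  have hSmeas : ∀ k, MeasurableSet (S k) := by
    intro k
    have hm : Measurable fun ω => μhat ω k := (measurable_pi_apply k).comp hmeas
    exact (hm (measurableSet_singleton _)).compl
  -- pointwise identity for the linear term
  have key : ∀ ω k, g w k * μhat ω k
      = |g w k| - 2 * |g w k| * (S k).indicator (fun _ => (1:ℝ)) ω := by
    intro ω k
    by_cases hω : ω ∈ S k
    · rw [Set.indicator_of_mem hω]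
      rcases lt_trichotomy (g w k) 0 with h | h | h
      · have hs : Real.sign (g w k) = -1 := Real.sign_of_neg h
        have hμ : μhat ω k = 1 := by
          rcases hsign ω k with h1 | h1
          · exact h1
          · exact absurd (h1.trans hs.symm) hω
        rw [hμ, abs_of_neg h]; ring
      · simp [h]
      · have hs : Real.sign (g w k) = 1 := Real.sign_of_pos h
        have hμ : μhat ω k = -1 := by
          rcases hsign ω k with h1 | h1
          · exact absurd (h1.trans hs.symm) hω
          · exact h1
        rw [hμ, abs_of_pos h]; ring
    · rw [Set.indicator_of_notMem hω]
      have h1 : μhat ω k = Real.sign (g w k) := not_not.mp hω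
      rcases lt_trichotomy (g w k) 0 with h | h | h
      · rw [h1, Real.sign_of_neg h, abs_of_neg h]; ring
      · simp [h]
      · rw [h1, Real.sign_of_pos h, abs_of_pos h]; ring
  -- pointwise bound
  have hbound : ∀ ω, f (w - γ • μhat ω) - f w ≤
      (∑ k, (-γ * |g w k| + 2 * γ * (|g w k| * (S k).indicator (fun _ => (1:ℝ)) ω)))
        + γ ^ 2 / 2 * ∑ k, L k := by
    intro ω
    have h1 := hsmooth w (w - γ • μhat ω)
    have hΔ : ∀ k, (w - γ • μhat ω) k - w k = -(γ * μhat ω k) := by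
      intro k
      simp only [Pi.sub_apply, Pi.smul_apply, smul_eq_mul]
      ring
    have h2 : f (w - γ • μhat ω) - f w ≤
        (∑ k, g w k * ((w - γ • μhat ω) k - w k))
          + (1/2) * ∑ k, L k * ((w - γ • μhat ω) k - w k) ^ 2 := by
      have := (abs_le.mp h1).2
      linarith
    have e1 : (∑ k, g w k * ((w - γ • μhat ω) k - w k))
        = ∑ k, (-γ * |g w k| + 2 * γ * (|g w k| * (S k).indicator (fun _ => (1:ℝ)) ω)) := by
      refine Finset.sum_congr rfl fun k _ => ?_
      rw [hΔ k, show g w k * -(γ * μhat ω k) = -γ * (g w k * μhat ω k) by ring, key ω k]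
      ring
    have e2 : (1/2) * (∑ k, L k * ((w - γ • μhat ω) k - w k) ^ 2) = γ ^ 2 / 2 * ∑ k, L k := by
      rw [Finset.mul_sum, Finset.mul_sum]
      refine Finset.sum_congr rfl fun k _ => ?_
      rw [hΔ k]
      rcases hsign ω k with h | h <;> rw [h] <;> ring
    rw [e1, e2] at h2
    exact h2
  -- integrability of the bound
  have hintR : Integrable (fun ω =>
      (∑ k, (-γ * |g w k| + 2 * γ * (|g w k| * (S k).indicator (fun _ => (1:ℝ)) ω)))
        + γ ^ 2 / 2 * ∑ k, L k) μ := by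
    apply Integrable.add _ (integrable_const _)
    apply integrable_finset_sum
    intro k _
    apply Integrable.add (integrable_const _)
    exact (((integrable_const (1:ℝ)).indicator (hSmeas k)).const_mul _).const_mul _
  have hint2 : Integrable (fun ω => f (w - γ • μhat ω) - f w) μ :=
    hint.sub (integrable_const _)
  have hki : ∀ k, Integrable
      (fun ω => -γ * |g w k| + 2 * γ * (|g w k| * (S k).indicator (fun _ => (1:ℝ)) ω)) μ :=
    fun k => (integrable_const _).add
      ((((integrable_const (1:ℝ)).indicator (hSmeas k)).const_mul _).const_mul _)
  have hIk : ∀ k, ∫ ω, (-γ * |g w k| + 2 * γ * (|g w k| * (S k).indicator (fun _ => (1:ℝ)) ω)) ∂μ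
      = -γ * |g w k| + 2 * γ * (|g w k| * (μ (S k)).toReal) := by
    intro k
    rw [integral_add (integrable_const _)
        ((((integrable_const (1:ℝ)).indicator (hSmeas k)).const_mul _).const_mul _),
      integral_const, probReal_univ, one_smul,
      integral_const_mul, integral_const_mul, integral_indicator_const _ (hSmeas k)]
    simp [Measure.real]
  have hmono := integral_mono hint2 hintR hbound
  refine hmono.trans_eq ?_
  rw [integral_add (integrable_finset_sum _ fun k _ => hki k) (integrable_const _),
    integral_const, probReal_univ, one_smul,
    integral_finset_sum _ (fun k _ => hki k),
    Finset.sum_congr rfl (fun k _ => hIk k),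
    Finset.sum_add_distrib, ← Finset.mul_sum, ← Finset.mul_sum]
end

section
/- Let n be odd, 0 < b < (n-1)/2, s = (n-1)/2 - b, L = ⌊(n - (2b+1))/(2(b+1))⌋ + 1. Construct G ∈ {0,1}^{n×n} by: G(1:s,1:s) = I_s (rest of rows 1..s zero); for l = 1..L, row s+l has ones exactly in columns s + (l-1)(b+1) + 1 through s + (l-1)(b+1) + 2b + 1 (2b+1 ones, shifted by b+1 per row); rows s+L+1 through n are all-ones. Then for every m ∈ {0,1}^n with weight (n-1)/2: |S_1(m)| + |S_{b+1}(m)| ≤ s, where S_1(m) = {i ≤ s : m_i = 1} and S_{b+1}(m) = {s < i ≤ s+L : mᵀG(i,:) ≥ b+1}. -/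
open Finset

private lemma interval_filter_card (n c d : ℕ) (m : Fin n → Bool) :
    (Finset.univ.filter fun j : Fin n =>
        c ≤ (j : ℕ) ∧ (j : ℕ) ≤ d ∧ m j = true).card ≤ d + 1 - c := by
  calc (Finset.univ.filter fun j : Fin n =>
        c ≤ (j : ℕ) ∧ (j : ℕ) ≤ d ∧ m j = true).card
      ≤ (Finset.Icc c d).card := by
        refine Finset.card_le_card_of_injOn (fun j => (j : ℕ)) ?_ ?_
        · intro j hj
          simp only [Finset.mem_coe, Finset.mem_filter, Finset.mem_univ, true_and] at hj
          simp only [Finset.mem_coe, Finset.mem_Icc]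
          exact ⟨hj.1, hj.2.1⟩
        · intro a _ b _ h
          exact Fin.ext h
    _ = d + 1 - c := Nat.card_Icc c d

private lemma window_key (n b s : ℕ) (m : Fin n → Bool) :
    ∀ (k : ℕ) (S : Finset ℕ) (l0 : ℕ), S.card ≤ k → S.Nonempty →
      (∀ l ∈ S, l0 ≤ l) →
      (∀ l ∈ S, b + 1 ≤ (Finset.univ.filter fun j : Fin n =>
          s + l * (b + 1) ≤ (j : ℕ) ∧ (j : ℕ) ≤ s + l * (b + 1) + 2 * b ∧
          m j = true).card) →
      b + S.card ≤ (Finset.univ.filter fun j : Fin n =>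
          s + l0 * (b + 1) ≤ (j : ℕ) ∧ m j = true).card := by
  intro k
  induction k with
  | zero =>
    intro S l0 hcard hne _ _
    exact absurd (Finset.card_pos.mpr hne) (by omega)
  | succ k ih =>
    intro S l0 hcard hne hlo hwin
    set l1 := S.min' hne with hl1def
    have hl1S : l1 ∈ S := S.min'_mem hne
    have hl0l1 : l0 ≤ l1 := hlo l1 hl1S
    have hmono : ∀ a c : ℕ, a ≤ c → s + a * (b + 1) ≤ s + c * (b + 1) := by
      intro a c h
      exact Nat.add_le_add_left (Nat.mul_le_mul_right _ h) s
    by_cases hS' : (S.erase l1).Nonempty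
    · set l2 := (S.erase l1).min' hS' with hl2def
      have hl2 : l2 ∈ S.erase l1 := Finset.min'_mem _ hS'
      have hl2S : l2 ∈ S := Finset.mem_of_mem_erase hl2
      have hl1lt : l1 < l2 :=
        lt_of_le_of_ne (S.min'_le _ hl2S) (Finset.ne_of_mem_erase hl2).symm
      -- gap between windows
      have hgap : s + l1 * (b + 1) + (b + 1) ≤ s + l2 * (b + 1) := by
        have : (l1 + 1) * (b + 1) ≤ l2 * (b + 1) :=
          Nat.mul_le_mul_right _ hl1lt
        calc s + l1 * (b + 1) + (b + 1) = s + (l1 + 1) * (b + 1) := by ring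
          _ ≤ s + l2 * (b + 1) := Nat.add_le_add_left this s
      set A : Finset (Fin n) := Finset.univ.filter fun j : Fin n =>
          s + l0 * (b + 1) ≤ (j : ℕ) ∧ m j = true with hA
      set A1 : Finset (Fin n) := Finset.univ.filter fun j : Fin n =>
          s + l1 * (b + 1) ≤ (j : ℕ) ∧ (j : ℕ) < s + l2 * (b + 1) ∧ m j = true with hA1
      set A2 : Finset (Fin n) := Finset.univ.filter fun j : Fin n =>
          s + l2 * (b + 1) ≤ (j : ℕ) ∧ m j = true with hA2
      set W : Finset (Fin n) := Finset.univ.filter fun j : Fin n =>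
          s + l1 * (b + 1) ≤ (j : ℕ) ∧ (j : ℕ) ≤ s + l1 * (b + 1) + 2 * b ∧
          m j = true with hW
      set W2 : Finset (Fin n) := Finset.univ.filter fun j : Fin n =>
          s + l2 * (b + 1) ≤ (j : ℕ) ∧ (j : ℕ) ≤ s + l1 * (b + 1) + 2 * b ∧
          m j = true with hW2
      have hWcard : b + 1 ≤ W.card := hwin l1 hl1S
      have hW2card : W2.card ≤ b := by
        have := interval_filter_card n (s + l2 * (b + 1)) (s + l1 * (b + 1) + 2 * b) m
        rw [← hW2] at this
        omega
      have hWsub : W ⊆ A1 ∪ W2 := by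
        intro j hj
        simp only [hW, Finset.mem_filter, Finset.mem_univ, true_and] at hj
        simp only [Finset.mem_union, hA1, hW2, Finset.mem_filter, Finset.mem_univ,
          true_and]
        by_cases hc : (j : ℕ) < s + l2 * (b + 1)
        · exact Or.inl ⟨hj.1, hc, hj.2.2⟩
        · exact Or.inr ⟨by omega, hj.2.1, hj.2.2⟩
      have hA1card : 1 ≤ A1.card := by
        have h1 : W.card ≤ A1.card + W2.card :=
          le_trans (Finset.card_le_card hWsub) (Finset.card_union_le _ _)
        omega
      have hdisj : Disjoint A1 A2 := by
        rw [Finset.disjoint_left]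
        intro j hj1 hj2
        simp only [hA1, Finset.mem_filter, Finset.mem_univ, true_and] at hj1
        simp only [hA2, Finset.mem_filter, Finset.mem_univ, true_and] at hj2
        omega
      have hsubA : A1 ∪ A2 ⊆ A := by
        intro j hj
        have hl0l2 : l0 ≤ l2 := hlo l2 hl2S
        simp only [Finset.mem_union, hA1, hA2, Finset.mem_filter, Finset.mem_univ,
          true_and] at hj
        simp only [hA, Finset.mem_filter, Finset.mem_univ, true_and]
        have h01 := hmono l0 l1 hl0l1
        have h02 := hmono l0 l2 hl0l2
        rcases hj with ⟨h, _, hm⟩ | ⟨h, hm⟩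
        · exact ⟨by omega, hm⟩
        · exact ⟨by omega, hm⟩
      have hIH : b + (S.erase l1).card ≤ A2.card := by
        have hc : (S.erase l1).card ≤ k := by
          have := Finset.card_erase_of_mem hl1S
          omega
        exact ih (S.erase l1) l2 hc hS'
          (fun l hl => Finset.min'_le _ _ hl)
          (fun l hl => hwin l (Finset.mem_of_mem_erase hl))
      have hcardS : S.card = (S.erase l1).card + 1 := by
        have := Finset.card_erase_of_mem hl1S
        have := Finset.card_pos.mpr hne
        omega
      have : A1.card + A2.card ≤ A.card := by
        calc A1.card + A2.card = (A1 ∪ A2).card :=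
              (Finset.card_union_of_disjoint hdisj).symm
          _ ≤ A.card := Finset.card_le_card hsubA
      omega
    · -- S = {l1}
      have hScard : S.card = 1 := by
        have h := Finset.card_erase_of_mem hl1S
        have h2 := Finset.card_pos.mpr hne
        have h3 : (S.erase l1).card = 0 := by
          rw [Finset.card_eq_zero]
          exact Finset.not_nonempty_iff_eq_empty.mp hS'
        omega
      have hsub : (Finset.univ.filter fun j : Fin n =>
          s + l1 * (b + 1) ≤ (j : ℕ) ∧ (j : ℕ) ≤ s + l1 * (b + 1) + 2 * b ∧
          m j = true) ⊆ (Finset.univ.filter fun j : Fin n =>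
          s + l0 * (b + 1) ≤ (j : ℕ) ∧ m j = true) := by
        intro j hj
        simp only [Finset.mem_filter, Finset.mem_univ, true_and] at hj ⊢
        have := hmono l0 l1 hl0l1
        exact ⟨by omega, hj.2.2⟩
      have := hwin l1 hl1S
      have := Finset.card_le_card hsub
      omega

/-- Core combinatorial property of the deterministic code of Algorithm 1: with `n`
odd, `0 < b < (n-1)/2`, `s = (n-1)/2 - b` and `L = ⌊(n-(2b+1))/(2(b+1))⌋ + 1`, for
every message `m ∈ {0,1}ⁿ` of weight `(n-1)/2`,
`|S₁(m)| + |S_{b+1}(m)| ≤ s`, where `S₁(m) = {i ≤ s : mᵢ = 1}` (the weight-1 identity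
rows) and `S_{b+1}(m) = {s < i ≤ s+L : mᵀG(i,:) ≥ b+1}` (the weight-`2b+1` middle
rows, row `s+l` covering the `2b+1` columns starting at `s + (l-1)(b+1) + 1`). -/
theorem algorithm1_tolerance_condition (n b s L : ℕ) (hn : Odd n)
    (hb0 : 0 < b) (hb : b < (n - 1) / 2)
    (hs : s = (n - 1) / 2 - b)
    (hL : L = (n - (2 * b + 1)) / (2 * (b + 1)) + 1) :
    ∀ m : Fin n → Bool,
      (Finset.univ.filter fun i => m i = true).card = (n - 1) / 2 →
      (Finset.univ.filter fun i : Fin n => (i : ℕ) < s ∧ m i = true).card +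
        (Finset.univ.filter fun i : Fin n =>
            s ≤ (i : ℕ) ∧ (i : ℕ) < s + L ∧
            b + 1 ≤ (Finset.univ.filter fun j : Fin n =>
              s + ((i : ℕ) - s) * (b + 1) ≤ (j : ℕ) ∧
              (j : ℕ) ≤ s + ((i : ℕ) - s) * (b + 1) + 2 * b ∧
              m j = true).card).card
        ≤ s := by
  intro m hm
  have htot : (Finset.univ.filter fun i => m i = true).card = s + b := by
    omega
  set S2 : Finset (Fin n) := Finset.univ.filter fun i : Fin n =>
      s ≤ (i : ℕ) ∧ (i : ℕ) < s + L ∧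
      b + 1 ≤ (Finset.univ.filter fun j : Fin n =>
        s + ((i : ℕ) - s) * (b + 1) ≤ (j : ℕ) ∧
        (j : ℕ) ≤ s + ((i : ℕ) - s) * (b + 1) + 2 * b ∧
        m j = true).card with hS2
  -- split total ones below / at-least s
  have e1 : (Finset.univ.filter fun i : Fin n => (i : ℕ) < s ∧ m i = true)
      = (Finset.univ.filter fun i : Fin n => m i = true).filter
          (fun i : Fin n => (i : ℕ) < s) := by
    ext i
    simp only [Finset.mem_filter, Finset.mem_univ, true_and]
    tauto
  have e2 : (Finset.univ.filter fun i : Fin n => s ≤ (i : ℕ) ∧ m i = true)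
      = (Finset.univ.filter fun i : Fin n => m i = true).filter
          (fun i : Fin n => ¬ (i : ℕ) < s) := by
    ext i
    simp only [Finset.mem_filter, Finset.mem_univ, true_and, not_lt]
    tauto
  have hsplit : (Finset.univ.filter fun i : Fin n => (i : ℕ) < s ∧ m i = true).card
      + (Finset.univ.filter fun i : Fin n => s ≤ (i : ℕ) ∧ m i = true).card
      = s + b := by
    rw [e1, e2, Finset.card_filter_add_card_filter_not, htot]
  by_cases hS2ne : S2.Nonempty
  · set Sn : Finset ℕ := S2.image (fun i : Fin n => (i : ℕ) - s) with hSn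
    have hcard : Sn.card = S2.card := by
      apply Finset.card_image_of_injOn
      intro a ha c hc h
      simp only [hS2, Finset.coe_filter, Finset.mem_univ, true_and,
        Set.mem_setOf_eq] at ha hc
      have h' : (a : ℕ) - s = (c : ℕ) - s := by simpa using h
      have : (a : ℕ) = (c : ℕ) := by omega
      exact Fin.ext this
    have hSnne : Sn.Nonempty := Finset.Nonempty.image hS2ne _
    have hkey := window_key n b s m Sn.card Sn 0 le_rfl hSnne
      (fun l _ => Nat.zero_le l)
      (by
        intro l hl
        simp only [hSn, Finset.mem_image] at hl
        obtain ⟨i, hi, rfl⟩ := hl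
        simp only [hS2, Finset.mem_filter, Finset.mem_univ, true_and] at hi
        exact hi.2.2)
    simp only [Nat.zero_mul, Nat.add_zero] at hkey
    omega
  · have hS2empty : S2.card = 0 := by
      rw [Finset.card_eq_zero]
      exact Finset.not_nonempty_iff_eq_empty.mp hS2ne
    have hle : (Finset.univ.filter fun i : Fin n => (i : ℕ) < s ∧ m i = true).card
        ≤ s := by
      calc (Finset.univ.filter fun i : Fin n => (i : ℕ) < s ∧ m i = true).card
          ≤ (Finset.range s).card := by
            refine Finset.card_le_card_of_injOn (fun i => (i : ℕ)) ?_ ?_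
            · intro i hi
              simp only [Finset.mem_coe, Finset.mem_filter, Finset.mem_univ, true_and] at hi
              simp only [Finset.mem_coe, Finset.mem_range]
              exact hi.1
            · intro a _ c _ h
              exact Fin.ext h
        _ = s := Finset.card_range s
    omega
end

section
/- Under the construction of Algorithm 1 with n odd and 0 < b < (n-1)/2, the computational redundancy r = (sum of all entries of G)/n equals (n + (2b+1))/2 - (⌊(n-(2b+1))/(2(b+1))⌋ + 1/2)·(n-(2b+1))/n. -/
/-- Computational redundancy of the deterministic code of Algorithm 1: with `n` odd,
`0 < b < (n-1)/2`, `s = (n-1)/2 - b`, `L = ⌊(n-(2b+1))/(2(b+1))⌋ + 1`, and `G` the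
allocation matrix (identity block on the first `s` rows, `2b+1` ones shifted by `b+1`
on the next `L` rows, all-ones on the remaining rows), the redundancy
`r = (Σᵢⱼ Gᵢⱼ)/n` equals
`(n + (2b+1))/2 - (⌊(n-(2b+1))/(2(b+1))⌋ + 1/2)·(n-(2b+1))/n`. -/
theorem algorithm1_redundancy (n b s L : ℕ) (hn : Odd n)
    (hb0 : 0 < b) (hb : b < (n - 1) / 2)
    (hs : s = (n - 1) / 2 - b)
    (hL : L = (n - (2 * b + 1)) / (2 * (b + 1)) + 1)
    (G : Fin n → Fin n → Bool)
    (hG : ∀ i j : Fin n, G i j =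
      if (i : ℕ) < s then decide ((j : ℕ) = (i : ℕ))
      else if (i : ℕ) < s + L then
        decide (s + ((i : ℕ) - s) * (b + 1) ≤ (j : ℕ) ∧
          (j : ℕ) ≤ s + ((i : ℕ) - s) * (b + 1) + 2 * b)
      else true) :
    (∑ i : Fin n, ∑ j : Fin n, (if G i j = true then (1 : ℝ) else 0)) / n =
      ((n : ℝ) + (2 * b + 1)) / 2 -
        ((((n - (2 * b + 1)) / (2 * (b + 1)) : ℕ) : ℝ) + 1 / 2) *
          ((n : ℝ) - (2 * b + 1)) / n := by
  obtain ⟨m, hm⟩ := hn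
  set ℓ := (n - (2 * b + 1)) / (2 * (b + 1)) with hldef
  have hP1 : ℓ * (2 * (b + 1)) ≤ n - (2 * b + 1) := Nat.div_mul_le_self _ _
  set P := ℓ * (b + 1) with hPdef
  have hP2 : ℓ * (2 * (b + 1)) = 2 * P := by rw [hPdef]; ring
  have hlP : ℓ ≤ P := Nat.le_mul_of_pos_right _ (by omega)
  have hn2 : 2 * b + 1 ≤ n := by omega
  have hs2 : 2 * s + 2 * b + 1 = n := by omega
  have hPs : P ≤ s := by omega
  have hsL : s + L ≤ n := by omega
  -- row sums
  have rowsum : ∀ i : Fin n, (∑ j : Fin n, (if G i j = true then (1:ℕ) else 0)) =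
      (if (i:ℕ) < s then 1 else if (i:ℕ) < s + L then 2*b+1 else n) := by
    intro i
    by_cases h1 : (i:ℕ) < s
    · rw [if_pos h1]
      have step : ∀ j : Fin n, (if G i j = true then (1:ℕ) else 0) = (if j = i then (1:ℕ) else 0) := by
        intro j; rw [hG, if_pos h1]; simp [Fin.val_eq_val]
      rw [Finset.sum_congr rfl (fun j _ => step j)]
      simp
    · by_cases h2 : (i:ℕ) < s + L
      · rw [if_neg h1, if_pos h2]
        set a := s + ((i:ℕ) - s) * (b + 1) with hadef
        have hmul : ((i:ℕ) - s) * (b + 1) ≤ P := by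
          rw [hPdef]
          exact Nat.mul_le_mul_right _ (by omega)
        have ha : a + 2 * b < n := by omega
        have step : ∀ j : Fin n, (if G i j = true then (1:ℕ) else 0) =
            (if (j:ℕ) ∈ Finset.Icc a (a + 2*b) then (1:ℕ) else 0) := by
          intro j
          rw [hG, if_neg h1, if_pos h2]
          simp [Finset.mem_Icc, hadef]
        rw [Finset.sum_congr rfl (fun j _ => step j)]
        rw [Fin.sum_univ_eq_sum_range (fun j => if j ∈ Finset.Icc a (a + 2*b) then (1:ℕ) else 0)]
        rw [Finset.sum_ite_mem]
        have hinter : Finset.range n ∩ Finset.Icc a (a + 2*b) = Finset.Icc a (a + 2*b) := by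
          apply Finset.inter_eq_right.mpr
          intro x hx
          simp only [Finset.mem_Icc] at hx
          simp only [Finset.mem_range]
          omega
        rw [hinter, Finset.sum_const, Nat.card_Icc, smul_eq_mul, mul_one]
        omega
      · rw [if_neg h1, if_neg h2]
        have step : ∀ j : Fin n, (if G i j = true then (1:ℕ) else 0) = 1 := by
          intro j; rw [hG, if_neg h1, if_neg h2]; simp
        rw [Finset.sum_congr rfl (fun j _ => step j), Finset.sum_const, smul_eq_mul, mul_one,
          Finset.card_univ, Fintype.card_fin]
  -- total sum as a natural number
  have key : (∑ i : Fin n, ∑ j : Fin n, (if G i j = true then (1:ℕ) else 0)) =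
      s + L * (2*b+1) + (n - s - L) * n := by
    rw [Finset.sum_congr rfl (fun i _ => rowsum i)]
    rw [Fin.sum_univ_eq_sum_range (fun k => if k < s then 1 else if k < s + L then 2*b+1 else n)]
    rw [Finset.range_eq_Ico, ← Finset.sum_Ico_consecutive _ (Nat.zero_le (s+L)) hsL,
      ← Finset.sum_Ico_consecutive _ (Nat.zero_le s) (Nat.le_add_right s L)]
    have e1 : (∑ k ∈ Finset.Ico 0 s, (if k < s then 1 else if k < s + L then 2*b+1 else n)) = s := by
      have h : ∀ k ∈ Finset.Ico 0 s, (if k < s then 1 else if k < s + L then 2*b+1 else n) = 1 := by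
        intro k hk; simp only [Finset.mem_Ico] at hk; rw [if_pos hk.2]
      rw [Finset.sum_congr rfl h, Finset.sum_const, Nat.card_Ico, smul_eq_mul, mul_one]
      omega
    have e2 : (∑ k ∈ Finset.Ico s (s+L), (if k < s then 1 else if k < s + L then 2*b+1 else n)) = L * (2*b+1) := by
      have h : ∀ k ∈ Finset.Ico s (s+L), (if k < s then 1 else if k < s + L then 2*b+1 else n) = 2*b+1 := by
        intro k hk; simp only [Finset.mem_Ico] at hk; rw [if_neg (by omega), if_pos hk.2]
      rw [Finset.sum_congr rfl h, Finset.sum_const, Nat.card_Ico, smul_eq_mul]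
      congr 1; omega
    have e3 : (∑ k ∈ Finset.Ico (s+L) n, (if k < s then 1 else if k < s + L then 2*b+1 else n)) = (n - s - L) * n := by
      have h : ∀ k ∈ Finset.Ico (s+L) n, (if k < s then 1 else if k < s + L then 2*b+1 else n) = n := by
        intro k hk; simp only [Finset.mem_Ico] at hk; rw [if_neg (by omega), if_neg (by omega)]
      rw [Finset.sum_congr rfl h, Finset.sum_const, Nat.card_Ico, smul_eq_mul]
      congr 1; omega
    rw [e1, e2, e3]
  -- convert the real sum to the natural one
  have conv : (∑ i : Fin n, ∑ j : Fin n, (if G i j = true then (1 : ℝ) else 0)) =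
      ((s + L * (2*b+1) + (n - s - L) * n : ℕ) : ℝ) := by
    rw [← key]
    push_cast
    rfl
  rw [conv]
  have h1 : s ≤ n := by omega
  have h2 : L ≤ n - s := by omega
  have hcast : ((s + L * (2*b+1) + (n - s - L) * n : ℕ) : ℝ) =
      (s:ℝ) + (L:ℝ) * (2*(b:ℝ)+1) + ((n:ℝ) - s - L) * n := by
    push_cast [Nat.cast_sub h2, Nat.cast_sub h1]
    ring
  rw [hcast]
  have hsR : (s:ℝ) = ((n:ℝ) - (2*(b:ℝ)+1)) / 2 := by
    have := hs2
    have : ((2*s + 2*b + 1 : ℕ) : ℝ) = (n:ℝ) := by rw [hs2]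
    push_cast at this
    linarith
  have hLR : (L:ℝ) = (ℓ:ℝ) + 1 := by rw [hL]; push_cast; rfl
  have hnR : (n:ℝ) ≠ 0 := Nat.cast_ne_zero.mpr (by omega)
  rw [hsR, hLR]
  field_simp
  ring
end

section
/- Let m ∈ {0,1}^n with weight (n-1)/2 in the setting of Algorithm 1, and suppose the middle-band set S_{b+1}(m) contains δ ≥ 1 consecutive indices {j, ..., j+δ-1}. Define a_l = Σ_{i=1}^{b} m_{s + (j-s-1+l)(b+1) + i} for l = 0,...,δ (counts of ones in overlapping blocks of width b). If additionally m is zero at the boundary positions m_{s+(j_0-s)(b+1)} for j_0 in the run, then a_{l} + a_{l+1} ≥ b+1 for each l = 0,...,δ-1, and consequently Σ_{l=0}^{δ} a_l ≥ b + δ. -/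
/-- `a_l`: number of ones of `m` in the `l`-th overlap block (of width `b`) of the run
of middle rows starting at row `j₀`, i.e. the columns
`s + (j₀ - s + l)(b+1), …, s + (j₀ - s + l)(b+1) + b - 1`. -/
def blockCount (n b s j₀ : ℕ) (m : Fin n → Bool) (l : ℕ) : ℕ :=
  (Finset.univ.filter fun j : Fin n =>
    s + (j₀ - s + l) * (b + 1) ≤ (j : ℕ) ∧
    (j : ℕ) < s + (j₀ - s + l) * (b + 1) + b ∧ m j = true).card

/-- Overlap-count inequality for the deterministic code: if the middle-band set
`S_{b+1}(m)` contains the `δ ≥ 1` consecutive rows `j₀, …, j₀ + δ - 1` (each such row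
`r` covering columns `s + (r-s)(b+1), …, s + (r-s)(b+1) + 2b` and satisfying
`mᵀG(r,:) ≥ b+1`) and `m` vanishes at the boundary columns `s + (r-s)(b+1) + b`, then
`a_l + a_{l+1} ≥ b + 1` for `l = 0, …, δ-1`, and consequently
`Σ_{l=0}^{δ} a_l ≥ b + δ`. -/
theorem overlap_count_bound (n b s L j₀ δ : ℕ) (hn : Odd n)
    (hb0 : 0 < b) (hb : b < (n - 1) / 2)
    (hs : s = (n - 1) / 2 - b)
    (hL : L = (n - (2 * b + 1)) / (2 * (b + 1)) + 1)
    (m : Fin n → Bool)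
    (hwt : (Finset.univ.filter fun i => m i = true).card = (n - 1) / 2)
    (hδ : 1 ≤ δ) (hj₀ : s ≤ j₀) (hjδ : j₀ + δ ≤ s + L)
    (hrun : ∀ r, j₀ ≤ r → r < j₀ + δ →
      b + 1 ≤ (Finset.univ.filter fun j : Fin n =>
        s + (r - s) * (b + 1) ≤ (j : ℕ) ∧
        (j : ℕ) ≤ s + (r - s) * (b + 1) + 2 * b ∧ m j = true).card)
    (hbnd : ∀ r, j₀ ≤ r → r < j₀ + δ → ∀ j : Fin n,
      (j : ℕ) = s + (r - s) * (b + 1) + b → m j = false) :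
    (∀ l, l < δ → b + 1 ≤ blockCount n b s j₀ m l + blockCount n b s j₀ m (l + 1)) ∧
    b + δ ≤ ∑ l ∈ Finset.range (δ + 1), blockCount n b s j₀ m l := by
  classical
  set a : ℕ → ℕ := blockCount n b s j₀ m with ha
  -- each block has at most b ones
  have hle : ∀ l, a l ≤ b := by
    intro l
    have h1 : (Finset.univ.filter fun j : Fin n =>
        s + (j₀ - s + l) * (b + 1) ≤ (j : ℕ) ∧
        (j : ℕ) < s + (j₀ - s + l) * (b + 1) + b ∧ m j = true).card
        ≤ (Finset.Ico (s + (j₀ - s + l) * (b + 1))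
            (s + (j₀ - s + l) * (b + 1) + b)).card := by
      refine Finset.card_le_card_of_injOn (fun j => (j : ℕ)) ?_ ?_
      · intro j hj
        simp only [Finset.mem_coe, Finset.mem_filter, Finset.mem_univ, true_and] at hj
        simp only [Finset.mem_coe, Finset.mem_Ico]
        exact ⟨hj.1, hj.2.1⟩
      · intro x _ y _ h
        exact Fin.ext h
    simpa [ha, blockCount] using h1
  -- key inequality
  have hkey : ∀ l, l < δ → b + 1 ≤ a l + a (l + 1) := by
    intro l hl
    have hr := hrun (j₀ + l) (by omega) (by omega)
    have hbd := hbnd (j₀ + l) (by omega) (by omega)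
    have hrs : j₀ + l - s = j₀ - s + l := by omega
    rw [hrs] at hr hbd
    set c := s + (j₀ - s + l) * (b + 1) with hc
    have hc' : s + (j₀ - s + (l + 1)) * (b + 1) = c + (b + 1) := by
      rw [hc]; ring
    have hsub : (Finset.univ.filter fun j : Fin n =>
        c ≤ (j : ℕ) ∧ (j : ℕ) ≤ c + 2 * b ∧ m j = true) ⊆
        (Finset.univ.filter fun j : Fin n =>
          c ≤ (j : ℕ) ∧ (j : ℕ) < c + b ∧ m j = true) ∪
        (Finset.univ.filter fun j : Fin n =>
          c + (b + 1) ≤ (j : ℕ) ∧ (j : ℕ) < c + (b + 1) + b ∧ m j = true) := by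
      intro j hj
      simp only [Finset.mem_filter, Finset.mem_univ, true_and, Finset.mem_union] at hj ⊢
      obtain ⟨h1, h2, h3⟩ := hj
      rcases lt_trichotomy ((j : ℕ)) (c + b) with h | h | h
      · exact Or.inl ⟨h1, h, h3⟩
      · exact absurd h3 (by rw [hbd j h]; simp)
      · exact Or.inr ⟨by omega, by omega, h3⟩
    calc b + 1 ≤ _ := hr
      _ ≤ _ := Finset.card_le_card hsub
      _ ≤ (Finset.univ.filter fun j : Fin n =>
            c ≤ (j : ℕ) ∧ (j : ℕ) < c + b ∧ m j = true).card +
          (Finset.univ.filter fun j : Fin n =>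
            c + (b + 1) ≤ (j : ℕ) ∧ (j : ℕ) < c + (b + 1) + b ∧ m j = true).card :=
        Finset.card_union_le _ _
      _ = a l + a (l + 1) := by
        simp only [ha, blockCount, hc', ← hc]
  -- positivity of each block count
  have hpos : ∀ l, l ≤ δ → 1 ≤ a l := by
    intro l hl
    rcases Nat.lt_or_ge l δ with h | h
    · have h1 := hkey l h
      have h2 := hle (l + 1)
      omega
    · have hld : l = δ := by omega
      have h1 := hkey (δ - 1) (by omega)
      have heq : δ - 1 + 1 = δ := by omega
      rw [heq] at h1
      have h2 := hle (δ - 1)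
      rw [hld]
      omega
  refine ⟨hkey, ?_⟩
  have hsplit : ∑ l ∈ Finset.Ico 0 2, a l + ∑ l ∈ Finset.Ico 2 (δ + 1), a l
      = ∑ l ∈ Finset.Ico 0 (δ + 1), a l :=
    Finset.sum_Ico_consecutive a (by omega) (by omega)
  have h01 : ∑ l ∈ Finset.Ico 0 2, a l = a 0 + a 1 := by
    rw [← Finset.range_eq_Ico]
    simp [Finset.sum_range_succ]
  have htail : (Finset.Ico 2 (δ + 1)).card • 1 ≤ ∑ l ∈ Finset.Ico 2 (δ + 1), a l :=
    Finset.card_nsmul_le_sum _ _ _ (fun l hl => by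
      have := Finset.mem_Ico.mp hl
      exact hpos l (by omega))
  have hcard : (Finset.Ico 2 (δ + 1)).card = δ - 1 := by
    rw [Nat.card_Ico]; omega
  have hk0 := hkey 0 (by omega)
  norm_num at hk0
  rw [Finset.range_eq_Ico, ← hsplit, h01]
  simp only [smul_eq_mul, mul_one] at htail
  omega
end
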